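/- Let X ⊆ ℝ² be a finite set with |X| = m and let Y ⊆ ℝ² be a finite set with |Y| ≤ 3 and X ∩ Y = ∅. Let r, r' be natural numbers with r = 2r', r' ≥ 4, and r ≤ m. Let u be an affinely independent triple of points of X ∪ Y, with circumcenter c(u) and circumradius ρ(u); let B_u = {q ∈ X ∪ Y : dist(c(u), q) < ρ(u)} and b_u = |B_u|. Let R be a uniformly random r-element subset of X and R' a uniformly random r'-element subset of X. Then Pr[u ⊆ R ∪ Y and B_u ∩ (R ∪ Y) = ∅] ≤ 64 · exp(−(r·b_u)/(2m)) · Pr[u ⊆ R' ∪ Y and B_u ∩ (R' ∪ Y) = ∅]. -/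

import Mathlib

open scoped Classical

/-- Step: `C(n+1, k+1) ≤ 4 * C(n, k)` when `n + 1 ≤ 4 * (k + 1)`. -/
lemma cf_choose_step (n k : ℕ) (h : n + 1 ≤ 4 * (k + 1)) :
    (n + 1).choose (k + 1) ≤ 4 * n.choose k := by
  apply Nat.le_of_mul_le_mul_right _ (show 0 < k + 1 by omega)
  calc (n + 1).choose (k + 1) * (k + 1) = (n + 1) * n.choose k := by
        rw [← Nat.add_one_mul_choose_eq]
    _ ≤ (4 * (k + 1)) * n.choose k := Nat.mul_le_mul_right _ h
    _ = 4 * n.choose k * (k + 1) := by ring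

lemma cf_lemA (r' : ℕ) (hr' : 4 ≤ r') : ∀ a, a ≤ 3 →
    (2 * r').choose r' ≤ 4 ^ a * ((2 * r' - a).choose (r' - a)) := by
  intro a
  induction a with
  | zero => simp
  | succ t ih =>
    intro h
    have step : (2 * r' - t).choose (r' - t) ≤
        4 * ((2 * r' - (t + 1)).choose (r' - (t + 1))) := by
      have e1 : 2 * r' - t = (2 * r' - (t + 1)) + 1 := by omega
      have e2 : r' - t = (r' - (t + 1)) + 1 := by omega
      rw [e1, e2]
      exact cf_choose_step _ _ (by omega)
    calc (2 * r').choose r' ≤ 4 ^ t * ((2 * r' - t).choose (r' - t)) := ih (by omega)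
      _ ≤ 4 ^ t * (4 * ((2 * r' - (t + 1)).choose (r' - (t + 1)))) :=
          Nat.mul_le_mul_left _ step
      _ = 4 ^ (t + 1) * ((2 * r' - (t + 1)).choose (r' - (t + 1))) := by ring

lemma cf_lemB (M m b : ℕ) (hMm : M ≤ m) :
    ∀ j, (M - b).choose j * m ^ j ≤ M.choose j * (m - b) ^ j := by
  intro j
  induction j with
  | zero => simp
  | succ j ih =>
    have cross : (M - b - j) * m ≤ (M - j) * (m - b) := by
      rcases Nat.le_total (b + j) M with h1 | h1
      · have hb : b ≤ m := by omega
        zify [show j ≤ M - b by omega, show b ≤ M by omega, show j ≤ M by omega, hb]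
        nlinarith [mul_nonneg (show (0:ℤ) ≤ (b:ℤ) by positivity)
          (show (0:ℤ) ≤ (m:ℤ) - ((M:ℤ) - j) by push_cast; omega)]
      · have : M - b - j = 0 := by omega
        simp [this]
    apply Nat.le_of_mul_le_mul_right _ (show 0 < j + 1 by omega)
    calc (M - b).choose (j + 1) * m ^ (j + 1) * (j + 1)
        = ((M - b).choose (j + 1) * (j + 1)) * m ^ (j + 1) := by ring
      _ = ((M - b).choose j * (M - b - j)) * m ^ (j + 1) := by
          rw [Nat.choose_succ_right_eq]
      _ = ((M - b).choose j * m ^ j) * ((M - b - j) * m) := by ring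
      _ ≤ (M.choose j * (m - b) ^ j) * ((M - j) * (m - b)) := Nat.mul_le_mul ih cross
      _ = (M.choose j * (M - j)) * (m - b) ^ (j + 1) := by ring
      _ = (M.choose (j + 1) * (j + 1)) * (m - b) ^ (j + 1) := by
          rw [Nat.choose_succ_right_eq]
      _ = M.choose (j + 1) * (m - b) ^ (j + 1) * (j + 1) := by ring

lemma cf_lemB_real (M m b r' : ℕ) (hMm : M ≤ m) (hbm : b ≤ m) (hm : 0 < m) :
    ((M - b).choose r' : ℝ) ≤ Real.exp (-((r' : ℝ) * b) / m) * M.choose r' := by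
  have hm0 : (0 : ℝ) < (m : ℝ) ^ r' := by positivity
  have hmpos : (0 : ℝ) < m := by exact_mod_cast hm
  have hbm' : (b : ℝ) ≤ m := by exact_mod_cast hbm
  rw [← mul_le_mul_iff_left₀ hm0]
  have h1 : ((M - b).choose r' : ℝ) * (m : ℝ) ^ r' ≤ (M.choose r' : ℝ) * ((m : ℝ) - b) ^ r' := by
    have hcast : (((M - b).choose r' * m ^ r' : ℕ) : ℝ) ≤ ((M.choose r' * (m - b) ^ r' : ℕ) : ℝ) :=
      Nat.cast_le.2 (cf_lemB M m b hMm r')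
    push_cast [Nat.cast_sub hbm] at hcast
    exact hcast
  refine h1.trans ?_
  have hone : (m : ℝ) - b ≤ m * Real.exp (-((b : ℝ) / m)) := by
    have h := Real.add_one_le_exp (-((b : ℝ) / m))
    calc (m : ℝ) - b = m * (-((b : ℝ) / m) + 1) := by field_simp; ring
      _ ≤ m * Real.exp (-((b : ℝ) / m)) := mul_le_mul_of_nonneg_left h (le_of_lt hmpos)
  have hexp : ((m : ℝ) - b) ^ r' ≤ ((m : ℝ) * Real.exp (-((b : ℝ) / m))) ^ r' :=
    pow_le_pow_left₀ (by linarith) hone r'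
  calc (M.choose r' : ℝ) * ((m : ℝ) - b) ^ r'
      ≤ (M.choose r' : ℝ) * ((m : ℝ) * Real.exp (-((b : ℝ) / m))) ^ r' :=
        mul_le_mul_of_nonneg_left hexp (Nat.cast_nonneg _)
    _ = Real.exp (-((r' : ℝ) * b) / m) * M.choose r' * (m : ℝ) ^ r' := by
        rw [mul_pow, ← Real.exp_nat_mul,
          show (r' : ℝ) * -((b : ℝ) / m) = -((r' : ℝ) * b) / m by ring]
        ring

lemma cf_key (m r' a b : ℕ) (ha : a ≤ 3) (hr' : 4 ≤ r') (hm : 2 * r' + b ≤ m) :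
    ((m - a - b).choose (2 * r' - a) : ℝ) * (m.choose r') ≤
      64 * Real.exp (-((r' : ℝ) * b) / m) * ((m - a - b).choose (r' - a)) *
        (m.choose (2 * r')) := by
  set N := m - a - b with hN
  set M := m - r' with hM
  set k := 2 * r' - a with hk
  set k' := r' - a with hk'
  set E := Real.exp (-((r' : ℝ) * b) / m) with hE
  have hEpos : 0 < E := Real.exp_pos _
  have hkN : k ≤ N := by omega
  have hk'k : k' ≤ k := by omega
  have hid1 : N.choose k * k.choose k' = N.choose k' * (M - b).choose r' := by
    have := Nat.choose_mul (n := N) hk'k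
    rwa [show N - k' = M - b by omega, show k - k' = r' by omega] at this
  have hid2 : m.choose (2 * r') * (2 * r').choose r' = m.choose r' * M.choose r' := by
    have := Nat.choose_mul (n := m) (show r' ≤ 2 * r' by omega)
    rwa [show m - r' = M from rfl, show 2 * r' - r' = r' by omega] at this
  have hA : ((2 * r').choose r' : ℝ) ≤ 64 * (k.choose k' : ℝ) := by
    have h1 := cf_lemA r' hr' a ha
    have h2 : 4 ^ a * ((2 * r' - a).choose (r' - a)) ≤ 64 * (k.choose k') := by
      apply Nat.mul_le_mul_right
      calc (4:ℕ) ^ a ≤ 4 ^ 3 := Nat.pow_le_pow_right (by norm_num) ha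
        _ = 64 := by norm_num
    exact_mod_cast (h1.trans h2)
  have hB : ((M - b).choose r' : ℝ) ≤ E * M.choose r' :=
    cf_lemB_real M m b r' (by omega) (by omega) (by omega)
  have hcpos : (0 : ℝ) < (k.choose k' : ℝ) * ((2 * r').choose r' : ℝ) := by
    have p1 : 0 < k.choose k' := Nat.choose_pos hk'k
    have p2 : 0 < (2 * r').choose r' := Nat.choose_pos (by omega)
    positivity
  rw [← mul_le_mul_iff_left₀ hcpos]
  have hid1' : (N.choose k : ℝ) * (k.choose k' : ℝ) =
      (N.choose k' : ℝ) * ((M - b).choose r' : ℝ) := by exact_mod_cast congrArg Nat.cast hid1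
  have hid2' : (m.choose (2 * r') : ℝ) * ((2 * r').choose r' : ℝ) =
      (m.choose r' : ℝ) * (M.choose r' : ℝ) := by exact_mod_cast congrArg Nat.cast hid2
  calc (N.choose k : ℝ) * (m.choose r') * ((k.choose k' : ℝ) * ((2 * r').choose r'))
      = ((N.choose k : ℝ) * (k.choose k')) * ((m.choose r' : ℝ) * ((2 * r').choose r')) := by
        ring
    _ = ((N.choose k' : ℝ) * (m.choose r')) *
          (((M - b).choose r' : ℝ) * ((2 * r').choose r')) := by rw [hid1']; ring
    _ ≤ ((N.choose k' : ℝ) * (m.choose r')) *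
          ((E * M.choose r') * (64 * (k.choose k'))) := by
        apply mul_le_mul_of_nonneg_left _ (by positivity)
        exact mul_le_mul hB hA (Nat.cast_nonneg _) (by positivity)
    _ = (64 * E * (N.choose k')) * ((m.choose r' : ℝ) * (M.choose r')) * (k.choose k') := by
        ring
    _ = (64 * E * (N.choose k')) * ((m.choose (2 * r') : ℝ) * ((2 * r').choose r')) *
          (k.choose k') := by rw [hid2']
    _ = 64 * E * (N.choose k') * (m.choose (2 * r')) *
          ((k.choose k' : ℝ) * ((2 * r').choose r')) := by ring

lemma cf_count {α : Type*} [DecidableEq α] (X A B : Finset α) (n : ℕ)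
    (hA : A ⊆ X) (hBX : B ⊆ X) (hAB : A ∩ B = ∅) (han : A.card ≤ n) :
    ((X.powersetCard n).filter (fun R => A ⊆ R ∧ R ∩ B = ∅)).card =
      (X.card - A.card - B.card).choose (n - A.card) := by
  have hBXA : B ⊆ X \ A := by
    intro x hx
    rw [Finset.mem_sdiff]
    refine ⟨hBX hx, fun hxA => ?_⟩
    have : x ∈ A ∩ B := Finset.mem_inter.2 ⟨hxA, hx⟩
    simp [hAB] at this
  have hcard : ((X \ A) \ B).card = X.card - A.card - B.card := by
    rw [Finset.card_sdiff_of_subset hBXA, Finset.card_sdiff_of_subset hA]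
  rw [← hcard, ← Finset.card_powersetCard]
  apply Finset.card_nbij' (fun R => R \ A) (fun S => S ∪ A)
  · intro R hR
    simp only [Finset.mem_coe, Finset.mem_filter, Finset.mem_powersetCard] at hR
    obtain ⟨⟨hRX, hRcard⟩, hAR, hRB⟩ := hR
    rw [Finset.mem_coe, Finset.mem_powersetCard]
    constructor
    · intro x hx
      rw [Finset.mem_sdiff] at hx ⊢
      refine ⟨Finset.mem_sdiff.2 ⟨hRX hx.1, hx.2⟩, fun hxB => ?_⟩
      have : x ∈ R ∩ B := Finset.mem_inter.2 ⟨hx.1, hxB⟩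
      simp [hRB] at this
    · rw [Finset.card_sdiff_of_subset hAR, hRcard]
  · intro S hS
    rw [Finset.mem_coe, Finset.mem_powersetCard] at hS
    obtain ⟨hSsub, hScard⟩ := hS
    have hSXA : S ⊆ X \ A := fun x hx => (Finset.mem_sdiff.1 (hSsub hx)).1
    have hSA : Disjoint S A := by
      rw [Finset.disjoint_left]
      intro x hx hxA
      exact (Finset.mem_sdiff.1 (hSXA hx)).2 hxA
    simp only [Finset.mem_coe, Finset.mem_filter, Finset.mem_powersetCard]
    refine ⟨⟨?_, ?_⟩, Finset.subset_union_right, ?_⟩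
    · intro x hx
      rcases Finset.mem_union.1 hx with h | h
      · exact (Finset.mem_sdiff.1 (Finset.mem_sdiff.1 (hSsub h)).1).1
      · exact hA h
    · rw [Finset.card_union_of_disjoint hSA, hScard]; omega
    · rw [Finset.eq_empty_iff_forall_notMem]
      intro x hx
      rw [Finset.mem_inter, Finset.mem_union] at hx
      obtain ⟨h1, h2⟩ := hx
      rcases h1 with h | h
      · exact (Finset.mem_sdiff.1 (hSsub h)).2 h2
      · have : x ∈ A ∩ B := Finset.mem_inter.2 ⟨h, h2⟩
        simp [hAB] at this
  · intro R hR
    simp only [Finset.mem_coe, Finset.mem_filter, Finset.mem_powersetCard] at hR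
    exact Finset.sdiff_union_of_subset hR.2.1
  · intro S hS
    rw [Finset.mem_coe, Finset.mem_powersetCard] at hS
    have hSXA : S ⊆ X \ A := fun x hx => (Finset.mem_sdiff.1 (hS.1 hx)).1
    show (S ∪ A) \ A = S
    rw [Finset.union_sdiff_distrib, Finset.sdiff_self, Finset.union_empty,
      Finset.sdiff_eq_self_iff_disjoint.2]
    rw [Finset.disjoint_left]
    intro x hx hxA
    exact (Finset.mem_sdiff.1 (hSXA hx)).2 hxA

/-- Chazelle–Friedman bound (Lemma 4 of the paper). For a random
`r`-subset `R` of `X` and a random `r'`-subset `R'` (with `r = 2r'`), the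
probability that the circumcenter of an affinely independent triple
`u ⊆ X ∪ Y` is a Voronoi vertex of `R ∪ Y` (i.e. `u ⊆ R ∪ Y` and the conflict
set of `u` avoids `R ∪ Y`) is at most `64 e^{-r b_u/(2m)}` times the same
probability for `R' ∪ Y`. Probabilities for a uniformly random `r`-subset are
expressed as counting ratios over `X.powersetCard r`. -/
theorem chazelle_friedman_voronoi
    (X Y : Finset (EuclideanSpace ℝ (Fin 2))) (m r r' : ℕ)
    (hX : X.card = m) (hY : Y.card ≤ 3) (hXY : X ∩ Y = ∅)
    (h2 : r = 2 * r') (hr' : 4 ≤ r') (hrm : r ≤ m)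
    (u : Finset (EuclideanSpace ℝ (Fin 2))) (hu3 : u.card = 3)
    (huXY : u ⊆ X ∪ Y)
    (hind : AffineIndependent ℝ (fun x : u => (x : EuclideanSpace ℝ (Fin 2))))
    (c : EuclideanSpace ℝ (Fin 2)) (ρ : ℝ) (hc : ∀ q ∈ u, dist c q = ρ) :
    (((X.powersetCard r).filter (fun R => u ⊆ R ∪ Y ∧
        ((X ∪ Y).filter (fun q => dist c q < ρ)) ∩ (R ∪ Y) = ∅)).card : ℝ) /
      ((X.powersetCard r).card : ℝ)
    ≤ 64 * Real.exp (-((r : ℝ) *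
          (((X ∪ Y).filter (fun q => dist c q < ρ)).card : ℝ)) / (2 * (m : ℝ))) *
      ((((X.powersetCard r').filter (fun R => u ⊆ R ∪ Y ∧
          ((X ∪ Y).filter (fun q => dist c q < ρ)) ∩ (R ∪ Y) = ∅)).card : ℝ) /
        ((X.powersetCard r').card : ℝ)) := by
  set B := (X ∪ Y).filter (fun q => dist c q < ρ) with hBdef
  by_cases hBY : B ∩ Y = ∅
  case neg =>
    have hempty : (X.powersetCard r).filter (fun R => u ⊆ R ∪ Y ∧
        B ∩ (R ∪ Y) = ∅) = ∅ := by
      rw [Finset.filter_eq_empty_iff]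
      rintro R _ ⟨_, h2'⟩
      apply hBY
      have hsub : B ∩ Y ⊆ B ∩ (R ∪ Y) :=
        Finset.inter_subset_inter (le_refl _) Finset.subset_union_right
      rw [h2'] at hsub
      exact Finset.subset_empty.1 hsub
    rw [hempty]
    simp only [Finset.card_empty, Nat.cast_zero, zero_div]
    positivity
  case pos =>
  have hBX : B ⊆ X := by
    intro q hq
    have hq' := Finset.mem_filter.1 hq
    rcases Finset.mem_union.1 hq'.1 with h | h
    · exact h
    · exfalso
      have : q ∈ B ∩ Y := Finset.mem_inter.2 ⟨hq, h⟩
      simp [hBY] at this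
  -- event rewriting
  have hev : ∀ n : ℕ, (X.powersetCard n).filter (fun R => u ⊆ R ∪ Y ∧
      B ∩ (R ∪ Y) = ∅) = (X.powersetCard n).filter (fun R => (u ∩ X) ⊆ R ∧ R ∩ B = ∅) := by
    intro n
    apply Finset.filter_congr
    intro R hR
    constructor
    · rintro ⟨h1, h2'⟩
      constructor
      · intro x hx
        have hxu := Finset.mem_inter.1 hx
        rcases Finset.mem_union.1 (h1 hxu.1) with h | h
        · exact h
        · exfalso
          have : x ∈ X ∩ Y := Finset.mem_inter.2 ⟨hxu.2, h⟩
          simp [hXY] at this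
      · rw [Finset.eq_empty_iff_forall_notMem]
        intro x hx
        have hx' := Finset.mem_inter.1 hx
        have : x ∈ B ∩ (R ∪ Y) :=
          Finset.mem_inter.2 ⟨hx'.2, Finset.mem_union_left _ hx'.1⟩
        rw [h2'] at this
        simp at this
    · rintro ⟨h1, h2'⟩
      constructor
      · intro x hx
        rcases Finset.mem_union.1 (huXY hx) with h | h
        · exact Finset.mem_union_left _ (h1 (Finset.mem_inter.2 ⟨hx, h⟩))
        · exact Finset.mem_union_right _ h
      · rw [Finset.eq_empty_iff_forall_notMem]
        intro x hx
        have hx' := Finset.mem_inter.1 hx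
        rcases Finset.mem_union.1 hx'.2 with h | h
        · have : x ∈ R ∩ B := Finset.mem_inter.2 ⟨h, hx'.1⟩
          rw [h2'] at this; simp at this
        · have : x ∈ B ∩ Y := Finset.mem_inter.2 ⟨hx'.1, h⟩
          rw [hBY] at this; simp at this
  set b := B.card with hb
  by_cases hmr : r + b ≤ m
  case neg =>
    have hempty : (X.powersetCard r).filter (fun R => u ⊆ R ∪ Y ∧
        B ∩ (R ∪ Y) = ∅) = ∅ := by
      rw [hev r, Finset.filter_eq_empty_iff]
      rintro R hR ⟨_, hRB⟩
      have hRmem := Finset.mem_powersetCard.1 hR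
      have hRXB : R ⊆ X \ B := by
        intro x hx
        rw [Finset.mem_sdiff]
        refine ⟨hRmem.1 hx, fun hxB => ?_⟩
        have : x ∈ R ∩ B := Finset.mem_inter.2 ⟨hx, hxB⟩
        rw [hRB] at this; simp at this
      have := Finset.card_le_card hRXB
      rw [hRmem.2, Finset.card_sdiff_of_subset hBX, hX] at this
      omega
    rw [hempty]
    simp only [Finset.card_empty, Nat.cast_zero, zero_div]
    positivity
  case pos =>
  set A := u ∩ X with hAdef
  set a := A.card with ha
  have haX : A ⊆ X := Finset.inter_subset_right
  have hAB : A ∩ B = ∅ := by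
    rw [Finset.eq_empty_iff_forall_notMem]
    intro x hx
    have hx' := Finset.mem_inter.1 hx
    have h1 : dist c x = ρ := hc x (Finset.mem_inter.1 hx'.1).1
    have h2' : dist c x < ρ := (Finset.mem_filter.1 hx'.2).2
    exact absurd h1 (ne_of_lt h2')
  have ha3 : a ≤ 3 := hu3 ▸ Finset.card_le_card Finset.inter_subset_left
  have har : a ≤ r := by omega
  have har' : a ≤ r' := by omega
  have hcount_r : ((X.powersetCard r).filter (fun R => u ⊆ R ∪ Y ∧
      B ∩ (R ∪ Y) = ∅)).card = (m - a - b).choose (r - a) := by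
    rw [hev r, cf_count X A B r haX hBX hAB har, hX]
  have hcount_r' : ((X.powersetCard r').filter (fun R => u ⊆ R ∪ Y ∧
      B ∩ (R ∪ Y) = ∅)).card = (m - a - b).choose (r' - a) := by
    rw [hev r', cf_count X A B r' haX hBX hAB har', hX]
  rw [hcount_r, hcount_r', Finset.card_powersetCard, Finset.card_powersetCard, hX]
  have hmr' : r' ≤ m := by omega
  have hpos_r : (0 : ℝ) < (m.choose r : ℝ) := by
    exact_mod_cast Nat.choose_pos hrm
  have hpos_r' : (0 : ℝ) < (m.choose r' : ℝ) := by
    exact_mod_cast Nat.choose_pos hmr'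
  rw [div_le_iff₀ hpos_r]
  have hkey := cf_key m r' a b ha3 hr' (by omega)
  have hEeq : Real.exp (-((r : ℝ) * (b : ℝ)) / (2 * (m : ℝ))) =
      Real.exp (-((r' : ℝ) * b) / m) := by
    congr 1
    have hm0 : (m : ℝ) ≠ 0 := by
      have : 0 < m := by omega
      exact_mod_cast this.ne'
    rw [h2]
    push_cast
    field_simp
  rw [hEeq, h2]
  calc ((m - a - b).choose (2 * r' - a) : ℝ)
      = ((m - a - b).choose (2 * r' - a) : ℝ) * (m.choose r') / (m.choose r') := by
        field_simp
    _ ≤ (64 * Real.exp (-((r' : ℝ) * b) / m) * ((m - a - b).choose (r' - a)) *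
          (m.choose (2 * r'))) / (m.choose r') := by
        exact div_le_div_of_nonneg_right hkey hpos_r'.le
    _ = 64 * Real.exp (-((r' : ℝ) * b) / m) *
          (((m - a - b).choose (r' - a) : ℝ) / (m.choose r')) * (m.choose (2 * r')) := by
        ring
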